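/- Let λ ∈ [1/(n+1), 1/2] and let P ⊆ R^n be a centrally symmetric polytope (P = -P) such that ∂P ⊆ (1-λ)P + λV(P). Then P = (1-λ)P + λV(P). -/

import Mathlib

open Set Pointwise Metric

/-- A polytope is the convex hull of finitely many points. -/
def IsPolytope {n : ℕ} (P : Set (EuclideanSpace ℝ (Fin n))) : Prop :=
  ∃ S : Finset (EuclideanSpace ℝ (Fin n)), P = convexHull ℝ (S : Set (EuclideanSpace ℝ (Fin n)))

private theorem neg_mem_interior_neg' {E : Type*} [NormedAddCommGroup E] [NormedSpace ℝ E]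
    (P : Set E) (x : E) (h : x ∈ interior P) : -x ∈ interior (-P) := by
  have h2 := (Homeomorph.neg E).image_interior P
  have h3 : ∀ s : Set E, ⇑(Homeomorph.neg E) '' s = -s := fun s => by
    ext y; simp [Set.mem_neg, Homeomorph.neg, Equiv.neg]
  rw [h3, h3] at h2
  rw [← h2]
  exact Set.neg_mem_neg.2 h

theorem stmt_13 {n : ℕ} (l : ℝ) (hl : l ∈ Set.Icc ((1 : ℝ) / ((n : ℝ) + 1)) (1 / 2))
    (P : Set (EuclideanSpace ℝ (Fin n))) (hP : IsPolytope P) (hsym : P = -P)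
    (hbd : frontier P ⊆ (1 - l) • P + l • (P.extremePoints ℝ)) :
    P = (1 - l) • P + l • (P.extremePoints ℝ) := by
  obtain ⟨S, rfl⟩ := hP
  set P := convexHull ℝ (S : Set (EuclideanSpace ℝ (Fin n))) with hPdef
  have hconv : Convex ℝ P := convex_convexHull _ _
  have hcomp : IsCompact P := S.finite_toSet.isCompact_convexHull ℝ
  have hl0 : (0 : ℝ) < l := lt_of_lt_of_le (by positivity) hl.1
  have hl1 : l ≤ 1 / 2 := hl.2
  have h1l : (0 : ℝ) < 1 - l := by linarith
  have hneg : ∀ x ∈ P, -x ∈ P := by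
    intro x hx
    rw [hsym]
    exact Set.neg_mem_neg.2 hx
  apply Set.Subset.antisymm _ ?_
  swap
  · rintro x ⟨a, ⟨p, hp, rfl⟩, w, ⟨v, hv, rfl⟩, rfl⟩
    exact hconv hp hv.1 (by linarith) hl0.le (by ring)
  intro x hx
  rcases eq_or_ne P ∅ with hPe | hPne
  · rw [hPe] at hx; exact absurd hx (Set.notMem_empty x)
  have hne : P.Nonempty := Set.nonempty_iff_ne_empty.2 hPne
  have h0 : (0 : EuclideanSpace ℝ (Fin n)) ∈ P := by
    obtain ⟨y, hy⟩ := hne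
    have h := hconv (a := 1/2) (b := 1/2) hy (hneg y hy) (by norm_num) (by norm_num) (by norm_num)
    have : (1/2 : ℝ) • y + (1/2 : ℝ) • (-y) = (0 : EuclideanSpace ℝ (Fin n)) := by module
    rwa [this] at h
  have hstar : StarConvex ℝ 0 P := hconv.starConvex h0
  have hll1 : l / (1 - l) ≤ 1 := (div_le_one h1l).2 (by linarith)
  by_cases hxf : x ∈ frontier P
  · exact hbd hxf
  have hxint : x ∈ interior P := by
    rw [hcomp.isClosed.frontier_eq] at hxf
    by_contra h
    exact hxf ⟨hx, h⟩
  have h0int : (0 : EuclideanSpace ℝ (Fin n)) ∈ interior P := by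
    have hnegint : -x ∈ interior P := by
      rw [hsym]
      exact neg_mem_interior_neg' P x hxint
    have h := (hconv.interior) (a := 1/2) (b := 1/2) hxint hnegint (by norm_num) (by norm_num)
      (by norm_num)
    have heq : (1/2 : ℝ) • x + (1/2 : ℝ) • (-x) = (0 : EuclideanSpace ℝ (Fin n)) := by module
    rwa [heq] at h
  have hnhds : P ∈ nhds (0 : EuclideanSpace ℝ (Fin n)) := mem_interior_iff_mem_nhds.1 h0int
  have habs : Absorbent ℝ P := absorbent_nhds_zero hnhds
  have hbdd : Bornology.IsVonNBounded ℝ P := NormedSpace.isVonNBounded_of_isBounded ℝ hcomp.isBounded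
  have key : ∀ v ∈ P.extremePoints ℝ, ∀ p ∈ P, ∀ g : ℝ, 0 ≤ g → g ≤ 1 →
      g • ((1 - l) • p + l • v) ∈ (1 - l) • P + l • (P.extremePoints ℝ) := by
    intro v hv p hp g hg0 hg1
    have hq : (l / (1 - l)) • (-v) ∈ P := hstar.smul_mem (hneg v hv.1) (by positivity) hll1
    have hpp : g • p + (1 - g) • ((l / (1 - l)) • (-v)) ∈ P :=
      hconv hp hq hg0 (by linarith) (by ring)
    refine ⟨(1 - l) • (g • p + (1 - g) • ((l / (1 - l)) • (-v))), ⟨_, hpp, rfl⟩,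
      l • v, ⟨v, hv, rfl⟩, ?_⟩
    show (1 - l) • (g • p + (1 - g) • ((l / (1 - l)) • (-v))) + l • v
        = g • ((1 - l) • p + l • v)
    match_scalars
    · ring
    · field_simp
      ring
  rcases eq_or_ne x 0 with rfl | hx0
  · obtain ⟨v, hv⟩ := hcomp.extremePoints_nonempty hne
    have hq : (l / (1 - l)) • (-v) ∈ P := hstar.smul_mem (hneg v hv.1) (by positivity) hll1
    have h := key v hv _ hq 1 zero_le_one le_rfl
    have heq : (1:ℝ) • ((1 - l) • ((l / (1 - l)) • (-v)) + l • v)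
        = (0 : EuclideanSpace ℝ (Fin n)) := by
      match_scalars
      field_simp
      ring
    rwa [heq] at h
  · set g := gauge P x with hg
    have hgpos : 0 < g := (gauge_pos habs hbdd).2 hx0
    have hglt : g < 1 := interior_subset_gauge_lt_one P hxint
    set b := g⁻¹ • x with hb
    have hgb : gauge P b = 1 := by
      rw [hb, gauge_smul_of_nonneg (by positivity : (0:ℝ) ≤ g⁻¹)]
      rw [smul_eq_mul, ← hg, inv_mul_cancel₀ hgpos.ne']
    have hbfr : b ∈ frontier P := (gauge_eq_one_iff_mem_frontier hconv hnhds).1 hgb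
    obtain ⟨a, ⟨p, hp, rfl⟩, w, ⟨v, hv, rfl⟩, hbw⟩ := hbd hbfr
    have hbw' : (1 - l) • p + l • v = b := hbw
    have hxeq : x = g • ((1 - l) • p + l • v) := by
      rw [hbw', hb, smul_smul, mul_inv_cancel₀ (ne_of_gt hgpos), one_smul]
    rw [hxeq]
    exact key v hv p hp g hgpos.le hglt.le
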